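/- For every ν > 0 and every x > -ν, 2(x+ν) p_ν(x) = -∫_{-ν}^{x} u p_ν(u) du, where p_ν(x) = (x+ν)^{ν/2-1} e^{-(x+ν)/2}/(2^{ν/2}Γ(ν/2)). -/

import Mathlib

open MeasureTheory Real intervalIntegral

/-- Density of the centered Gamma law `F(ν)`. -/
noncomputable def pnu (ν : ℝ) (x : ℝ) : ℝ :=
  if -ν < x then (x + ν) ^ (ν / 2 - 1) * Real.exp (-(x + ν) / 2) /
    (2 ^ (ν / 2) * Real.Gamma (ν / 2)) else 0

/-- Fundamental identity `2(x+ν) p_ν(x) = -∫_{-ν}^x u p_ν(u) du` for `x > -ν`. -/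
theorem pnu_fundamental_identity (ν : ℝ) (hν : 0 < ν) (x : ℝ) (hx : -ν < x) :
    2 * (x + ν) * pnu ν x = -∫ u in (-ν)..x, u * pnu ν u := by
  set C : ℝ := 2 ^ (ν / 2) * Real.Gamma (ν / 2) with hC
  have hCpos : 0 < C := by
    apply mul_pos (Real.rpow_pos_of_pos two_pos _)
    exact Real.Gamma_pos_of_pos (by linarith)
  set F : ℝ → ℝ := fun u => -2 * ((u + ν) ^ (ν / 2) * Real.exp (-(u + ν) / 2)) / C with hF
  -- continuity of F
  have hpowcont : Continuous (fun u : ℝ => (u + ν) ^ (ν / 2)) := by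
    rw [continuous_iff_continuousAt]
    intro u
    exact (Real.continuousAt_rpow_const _ _ (Or.inr (by linarith))).comp
      ((continuous_id.add continuous_const).continuousAt)
  have hFcont : Continuous F := by
    apply Continuous.div_const
    exact continuous_const.mul (hpowcont.mul
      (Real.continuous_exp.comp (((continuous_id.add continuous_const).neg).div_const 2)))
  -- derivative of F on the open interval
  have hderiv : ∀ u ∈ Set.Ioo (-ν) x, HasDerivAt F (u * pnu ν u) u := by
    intro u hu
    have ht : 0 < u + ν := by linarith [hu.1]
    have hadd : HasDerivAt (fun u : ℝ => u + ν) 1 u := (hasDerivAt_id u).add_const ν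
    have h1 : HasDerivAt (fun u : ℝ => (u + ν) ^ (ν / 2))
        ((ν / 2) * (u + ν) ^ (ν / 2 - 1)) u := by
      have h := (Real.hasDerivAt_rpow_const (x := u + ν) (p := ν / 2) (Or.inl ht.ne'))
      simpa [Function.comp_def] using h.comp u hadd
    have hinner : HasDerivAt (fun u : ℝ => -(u + ν) / 2) (-(1 : ℝ) / 2) u := by
      simpa using hadd.neg.div_const 2
    have h2 : HasDerivAt (fun u : ℝ => Real.exp (-(u + ν) / 2))
        (Real.exp (-(u + ν) / 2) * (-(1 : ℝ) / 2)) u := by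
      simpa [Function.comp_def] using (Real.hasDerivAt_exp (-(u + ν) / 2)).comp u hinner
    have h3 : HasDerivAt F _ u := ((h1.mul h2).const_mul (-2 : ℝ)).div_const C
    convert h3 using 1
    have hpow : (u + ν) ^ (ν / 2) = (u + ν) ^ (ν / 2 - 1) * (u + ν) := by
      rw [← Real.rpow_add_one ht.ne']
      ring_nf
    rw [pnu, if_pos hu.1, hpow]
    field_simp
    ring
  -- integrability
  have hInt : IntervalIntegrable (fun u => u * pnu ν u) volume (-ν) x := by
    have hg0 : IntervalIntegrable (fun u : ℝ => (u + ν) ^ (ν / 2 - 1)) volume (-ν) x := by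
      have h := (intervalIntegral.intervalIntegrable_rpow' (a := 0) (b := x + ν)
        (r := ν / 2 - 1) (by linarith)).comp_add_right ν
      simpa using h
    have hg : IntervalIntegrable
        (fun u : ℝ => (u * Real.exp (-(u + ν) / 2) / C) * (u + ν) ^ (ν / 2 - 1))
        volume (-ν) x := by
      apply hg0.continuousOn_mul
      apply Continuous.continuousOn
      exact (continuous_id.mul
        (Real.continuous_exp.comp (((continuous_id.add continuous_const).neg).div_const 2))).div_const C
    rw [intervalIntegrable_iff] at hg ⊢
    apply hg.congr_fun _ measurableSet_uIoc
    intro u hu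
    rw [Set.uIoc_of_le hx.le] at hu
    simp only [pnu, if_pos hu.1]
    ring
  -- FTC
  have hFTC := intervalIntegral.integral_eq_sub_of_hasDerivAt_of_le hx.le
    hFcont.continuousOn hderiv hInt
  rw [hFTC]
  have hF0 : F (-ν) = 0 := by
    simp only [hF]
    rw [neg_add_cancel, Real.zero_rpow (by linarith)]
    ring
  have hxν : 0 < x + ν := by linarith
  have hpow : (x + ν) ^ (ν / 2) = (x + ν) ^ (ν / 2 - 1) * (x + ν) := by
    rw [← Real.rpow_add_one hxν.ne']
    ring_nf
  rw [hF0, pnu, if_pos hx]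
  simp only [hF]
  rw [hpow]
  field_simp
  ring
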